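/- If a binary word w does not contain 1^{2n+1} (2n+1 consecutive ones) as an infix and w begins and ends with 0, then the word obtained by concatenating copies of such words separated by blocks 1^{2n+2} does not contain 1^{2n+3} as an infix. -/

import Mathlib

/-- `ones k` is the binary word consisting of `k` ones. -/
def ones (k : ℕ) : List (Fin 2) := List.replicate k 1

private lemma infix_append_tri {α} {l a b : List α} (h : l <:+: a ++ b) :
    l <:+: a ∨ l <:+: b ∨
      ∃ l₁ l₂, l = l₁ ++ l₂ ∧ l₁ ≠ [] ∧ l₂ ≠ [] ∧ l₁ <:+ a ∧ l₂ <+: b := by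
  obtain ⟨s, t, hst⟩ := h
  rw [List.append_assoc] at hst
  rcases List.append_eq_append_iff.mp hst with ⟨a', ha, hlt⟩ | ⟨s', hs, hb⟩
  · rcases List.append_eq_append_iff.mp hlt with ⟨c, hac, ht⟩ | ⟨c, hl, hb⟩
    · left
      exact ⟨s, c, by rw [ha, hac, List.append_assoc]⟩
    · rcases eq_or_ne a' [] with rfl | ha'
      · right; left
        exact ⟨[], t, by simp at hl; rw [hl]; simp [hb]⟩
      · rcases eq_or_ne c [] with rfl | hc
        · left
          exact ⟨s, [], by simp at hl ⊢; rw [ha, hl]⟩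
        · right; right
          exact ⟨a', c, hl, ha', hc, ⟨s, ha.symm⟩, ⟨t, hb.symm⟩⟩
  · right; left
    exact ⟨s', t, by rw [List.append_assoc]; exact hb.symm⟩

private lemma replicate_of_infix_replicate {α} {a : α} {k : ℕ} {l : List α}
    (h : l <:+: List.replicate k a) : l = List.replicate l.length a :=
  List.eq_replicate_iff.mpr ⟨rfl, fun b hb => List.eq_of_mem_replicate (h.subset hb)⟩

private lemma not_suffix_ones {u : List (Fin 2)} (hu : u.getLast? = some 0)
    {l : List (Fin 2)} (hl : l ≠ []) (hrep : l = List.replicate l.length (1 : Fin 2))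
    (h : l <:+ u) : False := by
  obtain ⟨s, rfl⟩ := h
  rw [List.getLast?_append_of_ne_nil _ hl, hrep, List.getLast?_replicate] at hu
  simp [List.length_eq_zero_iff, hl] at hu

private lemma not_prefix_ones {u : List (Fin 2)} (hu : u.head? = some 0)
    {l : List (Fin 2)} (hl : l ≠ []) (hrep : l = List.replicate l.length (1 : Fin 2))
    (h : l <+: u) : False := by
  obtain ⟨s, rfl⟩ := h
  rw [List.head?_append_of_ne_nil _ hl] at hu
  cases l with
  | nil => exact hl rfl
  | cons x xs =>
    simp only [List.head?_cons, Option.some.injEq] at hu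
    have : x = 1 := by
      have := hrep ▸ (List.mem_cons_self : x ∈ x :: xs)
      exact List.eq_of_mem_replicate this
    rw [this] at hu
    exact absurd hu (by decide)

/-- ones (2n+1) is infix of ones (2n+3) -/
private lemma intercalate_singleton' {α} (sep a : List α) :
    List.intercalate sep [a] = a := by simp [List.intercalate]

private lemma intercalate_cons₂ {α} (sep a b : List α) (l : List (List α)) :
    List.intercalate sep (a :: b :: l) = a ++ sep ++ List.intercalate sep (b :: l) := by
  simp [List.intercalate, List.intersperse]

private lemma ones_small_infix (n : ℕ) : ones (2 * n + 1) <:+: ones (2 * n + 3) := by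
  refine List.IsPrefix.isInfix ⟨List.replicate 2 1, ?_⟩
  show List.replicate (2*n+1) (1:Fin 2) ++ List.replicate 2 1 = List.replicate (2*n+3) 1
  rw [← List.replicate_add]

theorem no_long_ones (n : ℕ) (us : List (List (Fin 2)))
    (hbegin : ∀ u ∈ us, u.head? = some 0)
    (hend : ∀ u ∈ us, u.getLast? = some 0)
    (hones : ∀ u ∈ us, ¬ ones (2 * n + 1) <:+: u) :
    ¬ ones (2 * n + 3) <:+: List.intercalate (ones (2 * n + 2)) us := by
  induction us with
  | nil =>
    intro h
    have := h.length_le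
    simp [ones, List.intercalate] at this
  | cons u vs ih =>
    have hinu : ¬ ones (2 * n + 3) <:+: u := fun h =>
      hones u (List.mem_cons_self : u ∈ u :: vs) ((ones_small_infix n).trans h)
    cases vs with
    | nil =>
      rw [intercalate_singleton']
      exact hinu
    | cons v vs' =>
      rw [intercalate_cons₂]
      intro h
      rw [List.append_assoc] at h
      rcases infix_append_tri h with h1 | h1 | ⟨l₁, l₂, heq, hl₁, hl₂, hsuf, hpre⟩
      · exact hinu h1
      · -- infix of sep ++ rest
        have hrest : (List.intercalate (ones (2 * n + 2)) (v :: vs')).head? = some 0 := by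
          have hv : v.head? = some 0 := hbegin v (by simp)
          have hvne : v ≠ [] := fun hh => by simp [hh] at hv
          cases vs' with
          | nil => rw [intercalate_singleton']; exact hv
          | cons w ws =>
            rw [intercalate_cons₂, List.append_assoc,
              List.head?_append_of_ne_nil _ hvne]
            exact hv
        rcases infix_append_tri h1 with h2 | h2 | ⟨l₁, l₂, heq, hl₁, hl₂, hsuf, hpre⟩
        · have := h2.length_le
          simp [ones] at this
        · exact ih (fun u hu => hbegin u (by simp [hu]))
            (fun u hu => hend u (by simp [hu]))
            (fun u hu => hones u (by simp [hu])) h2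
        · -- l₂ nonempty prefix of rest, all ones
          have hrep : ones (2 * n + 3) = List.replicate (ones (2*n+3)).length (1 : Fin 2) := by
            simp [ones]
          have hrep₂ : l₂ = List.replicate l₂.length (1 : Fin 2) :=
            replicate_of_infix_replicate (k := 2*n+3) (by
              show l₂ <:+: ones (2*n+3)
              rw [heq]; exact (List.suffix_append l₁ l₂).isInfix)
          exact not_prefix_ones hrest hl₂ hrep₂ hpre
      · have hrep₁ : l₁ = List.replicate l₁.length (1 : Fin 2) :=
          replicate_of_infix_replicate (k := 2*n+3) (by
            show l₁ <:+: ones (2*n+3)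
            rw [heq]; exact (List.prefix_append l₁ l₂).isInfix)
        exact not_suffix_ones (hend u (by simp)) hl₁ hrep₁ hsuf
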